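/- The polynomial module A_n = ℂ[t_1,…,t_n], viewed as a module over the zero-divergence Lie algebra S_n (n ≥ 2) via vector fields acting as differential operators, has a unique nonzero proper S_n-submodule, namely the constants ℂ·1; hence A_n/ℂ·1 is a simple S_n-module. -/

import Mathlib

set_option maxHeartbeats 1000000
set_option synthInstance.maxHeartbeats 1000000

open MvPolynomial TensorProduct

noncomputable section

/-- The polynomial algebra `A_n = ℂ[t_1,…,t_n]`. -/
abbrev Pn (n : ℕ) := MvPolynomial (Fin n) ℂ

/-- The Witt algebra `W_n = Der(ℂ[t_1,…,t_n])`. -/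
abbrev Wn (n : ℕ) := Derivation ℂ (Pn n) (Pn n)

/-- The divergence of the polynomial vector field `D = Σ_i D(t_i) ∂_i`. -/
def divg {n : ℕ} (D : Wn n) : Pn n := ∑ i, pderiv i (D (X i))

/-- `e_i ∈ ℤ^n`, the `i`-th standard basis vector. -/
def e' {n : ℕ} (i : Fin n) : Fin n → ℤ := Pi.single i 1

/-- the monomial `t^α` for `α ∈ ℤ_{≥0}^n` -/
def nmon {n : ℕ} (α : Fin n → ℕ) : Pn n := monomial (Finsupp.equivFunOnFinite.symm α) 1

/-- the monomial `t^β` for `β ∈ ℤ^n` (negative exponents truncated; only used where an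
accompanying scalar coefficient vanishes unless `β ≥ 0`). -/
def zmon {n : ℕ} (β : Fin n → ℤ) : Pn n := nmon (fun k => (β k).toNat)

/-- The vector field `t^α ∂_i`, as a derivation. -/
def tdDeriv {n : ℕ} (α : Fin n → ℕ) (i : Fin n) : Wn n :=
  mkDerivation ℂ (fun k => if k = i then nmon α else 0)

/-- `L_{ij}^α = t^α((1+α_j) t_i ∂_i − (1+α_i) t_j ∂_j)
  = (1+α_j) t^{α+e_i} ∂_i − (1+α_i) t^{α+e_j} ∂_j`, as a derivation. -/
def Lij {n : ℕ} (α : Fin n → ℤ) (i j : Fin n) : Wn n :=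
  mkDerivation ℂ (fun k =>
    if k = i then ((1 + α j : ℤ) : ℂ) • zmon (α + e' i)
    else if k = j then -(((1 + α i : ℤ) : ℂ) • zmon (α + e' j))
    else 0)

section Aux

variable {n : ℕ}

lemma nmon_coe (s : Fin n →₀ ℕ) : nmon (⇑s) = monomial s 1 := by
  rw [nmon, Finsupp.equivFunOnFinite_symm_coe]

lemma nmon_zero : nmon (0 : Fin n → ℕ) = 1 := by
  have : (0 : Fin n → ℕ) = ⇑(0 : Fin n →₀ ℕ) := rfl
  rw [this, nmon_coe, monomial_zero']
  simp

lemma nmon_single (k : Fin n) : nmon (Pi.single k 1) = X k := by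
  have : (Pi.single k 1 : Fin n → ℕ) = ⇑(Finsupp.single k 1) := by
    ext m
    rcases eq_or_ne m k with rfl | hm
    · simp
    · simp [Finsupp.single_apply, Pi.single_eq_of_ne hm, (Ne.symm hm)]
  rw [this, nmon_coe, X]

lemma coeff_pderiv (i : Fin n) (u : Fin n →₀ ℕ) (f : Pn n) :
    coeff u (pderiv i f) = ((u i + 1 : ℕ) : ℂ) * coeff (u + Finsupp.single i 1) f := by
  induction f using MvPolynomial.induction_on' with
  | add p q hp hq => simp [map_add, hp, hq, mul_add]
  | monomial s a =>
    rw [pderiv_monomial, coeff_monomial, coeff_monomial]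
    by_cases h : s = u + Finsupp.single i 1
    · subst h
      rw [if_pos rfl, if_pos (add_tsub_cancel_right _ _)]
      have h2 : ((u + Finsupp.single i 1 : Fin n →₀ ℕ)) i = u i + 1 := by
        rw [Finsupp.add_apply, Finsupp.single_eq_same]
      rw [h2]
      push_cast
      ring
    · rw [if_neg h, mul_zero]
      by_cases h2 : s - Finsupp.single i 1 = u
      · have hsi : s i = 0 := by
          by_contra hsi
          exact h (by rw [← h2, tsub_add_cancel_of_le (Finsupp.single_le_iff.mpr (by omega))])
        rw [if_pos h2, hsi]
        simp
      · rw [if_neg h2]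

lemma mem_support_pderiv {i : Fin n} {u : Fin n →₀ ℕ} {f : Pn n}
    (hu : u ∈ (pderiv i f).support) : u + Finsupp.single i 1 ∈ f.support := by
  rw [mem_support_iff] at *
  intro h
  apply hu
  rw [coeff_pderiv, h, mul_zero]

lemma degsum (u : Fin n →₀ ℕ) (i : Fin n) :
    ((u + Finsupp.single i 1).sum fun _ e => e) = (u.sum fun _ e => e) + 1 := by
  rw [Finsupp.sum_add_index' (fun _ => rfl) (fun _ _ _ => rfl),
    Finsupp.sum_single_index rfl]

lemma finsupp_sum_eq_zero {u : Fin n →₀ ℕ} (h : (u.sum fun _ e => e) = 0) : u = 0 := by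
  ext a
  rw [Finsupp.coe_zero, Pi.zero_apply]
  by_contra ha
  have hmem : a ∈ u.support := Finsupp.mem_support_iff.mpr ha
  have hle : u a ≤ u.sum fun _ e => e := by
    rw [Finsupp.sum]
    exact Finset.single_le_sum (fun _ _ => Nat.zero_le _) hmem
  omega

lemma totalDegree_pderiv_lt {f : Pn n} (hf : 0 < f.totalDegree) (i : Fin n) :
    (pderiv i f).totalDegree < f.totalDegree := by
  rw [totalDegree, Finset.sup_lt_iff (show ⊥ < f.totalDegree from hf)]
  intro v hv
  have h1 := le_totalDegree (mem_support_pderiv hv)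
  have h2 := degsum v i
  omega

lemma pderiv_degree_lt {f : Pn n} (hf : 0 < f.totalDegree) :
    ∃ i, pderiv i f ≠ 0 ∧ f.totalDegree ≤ (pderiv i f).totalDegree + 1 ∧
      (pderiv i f).totalDegree < f.totalDegree := by
  have hf0 : f ≠ 0 := by
    intro h
    rw [h, totalDegree_zero] at hf
    omega
  obtain ⟨s, hs, hdeg⟩ := Finset.exists_mem_eq_sup f.support (support_nonempty.mpr hf0)
    (fun s => s.sum fun _ e => e)
  have hdeg' : (s.sum fun _ e => e) = f.totalDegree := hdeg.symm
  have hspos : 0 < s.sum fun _ e => e := by omega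
  have hsne : s ≠ 0 := by
    intro h
    rw [h] at hspos
    simp at hspos
  obtain ⟨i, hi⟩ := Finsupp.ne_iff.mp hsne
  rw [Finsupp.coe_zero, Pi.zero_apply] at hi
  have hle : Finsupp.single i 1 ≤ s := Finsupp.single_le_iff.mpr (by omega)
  set u := s - Finsupp.single i 1 with hu
  have hus : u + Finsupp.single i 1 = s := tsub_add_cancel_of_le hle
  have hcoeff : coeff u (pderiv i f) ≠ 0 := by
    rw [coeff_pderiv, hus]
    exact mul_ne_zero (Nat.cast_ne_zero.mpr (Nat.succ_ne_zero _)) (mem_support_iff.mp hs)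
  have hmem : u ∈ (pderiv i f).support := mem_support_iff.mpr hcoeff
  have hne : pderiv i f ≠ 0 := by
    intro h
    rw [h] at hcoeff
    simp at hcoeff
  refine ⟨i, hne, ?_, totalDegree_pderiv_lt hf i⟩
  have h1 := le_totalDegree hmem
  have h2 := degsum u i
  rw [hus] at h2
  omega

lemma eq_C_of_totalDegree_eq_zero {f : Pn n} (hf : f.totalDegree = 0) :
    f = C (coeff 0 f) := by
  ext u
  by_cases hu : u = 0
  · subst hu
    simp
  · rw [coeff_C, if_neg (Ne.symm hu)]
    by_contra h
    have hu' := (totalDegree_eq_zero_iff _ f).mp hf u (mem_support_iff.mpr h)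
    exact hu (Finsupp.ext hu')

lemma divg_pderiv (i : Fin n) : divg (pderiv i : Wn n) = 0 := by
  rw [divg]
  apply Finset.sum_eq_zero
  intro k _
  rcases eq_or_ne k i with rfl | hk
  · rw [pderiv_X_self, pderiv_one]
  · rw [pderiv_X_of_ne hk, map_zero]

lemma divg_smul (c : ℂ) (D : Wn n) : divg (c • D) = c • divg D := by
  rw [divg, divg, Finset.smul_sum]
  apply Finset.sum_congr rfl
  intro k _
  rw [Derivation.smul_apply, Derivation.map_smul]

lemma divg_sub (D E : Wn n) : divg (D - E) = divg D - divg E := by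
  rw [divg, divg, divg, ← Finset.sum_sub_distrib]
  apply Finset.sum_congr rfl
  intro k _
  rw [Derivation.sub_apply, map_sub]

lemma divg_tdDeriv (α : Fin n → ℕ) (i : Fin n) :
    divg (tdDeriv α i) = pderiv i (nmon α) := by
  rw [divg]
  rw [Finset.sum_eq_single i]
  · rw [tdDeriv, mkDerivation_X, if_pos rfl]
  · intro k _ hk
    rw [tdDeriv, mkDerivation_X, if_neg hk, map_zero]
  · intro h
    exact absurd (Finset.mem_univ i) h

lemma divg_tdDeriv_zero {α : Fin n → ℕ} (i : Fin n) (h : α i = 0) :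
    divg (tdDeriv α i) = 0 := by
  rw [divg_tdDeriv, nmon, pderiv_monomial]
  have h2 : (Finsupp.equivFunOnFinite.symm α) i = 0 := by
    rw [Finsupp.coe_equivFunOnFinite_symm, h]
  rw [h2]
  simp

lemma pderiv_nmon_succ (α : Fin n → ℕ) (i : Fin n) :
    pderiv i (nmon (α + Pi.single i 1)) = ((α i + 1 : ℕ) : ℂ) • nmon α := by
  rw [nmon, nmon, pderiv_monomial]
  have h1 : Finsupp.equivFunOnFinite.symm (α + Pi.single i 1) - Finsupp.single i 1
      = Finsupp.equivFunOnFinite.symm α := by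
    ext k
    rw [Finsupp.tsub_apply]
    rw [Finsupp.coe_equivFunOnFinite_symm, Finsupp.coe_equivFunOnFinite_symm]
    rcases eq_or_ne k i with rfl | hk
    · simp
    · simp [Pi.single_eq_of_ne hk, Finsupp.single_apply, Ne.symm hk]
  have h2 : (Finsupp.equivFunOnFinite.symm (α + Pi.single i 1)) i = α i + 1 := by
    rw [Finsupp.coe_equivFunOnFinite_symm]
    simp
  rw [h1, h2, smul_monomial]
  simp

lemma tdDeriv_apply (α : Fin n → ℕ) (i : Fin n) (f : Pn n) :
    tdDeriv α i f = nmon α * pderiv i f := by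
  have h : tdDeriv α i = nmon α • pderiv i := by
    apply derivation_ext
    intro m
    rw [tdDeriv, mkDerivation_X, Derivation.smul_apply]
    rcases eq_or_ne m i with rfl | hm
    · rw [if_pos rfl, pderiv_X_self, smul_eq_mul, mul_one]
    · rw [if_neg hm, pderiv_X_of_ne hm, smul_zero]
  rw [h, Derivation.smul_apply, smul_eq_mul]

end Aux

/-- The polynomial module `A_n = ℂ[t_1,…,t_n]`, viewed as a module over
the zero-divergence Lie algebra `S_n` (`n ≥ 2`) with vector fields acting as derivations,
has a unique nonzero proper `S_n`-submodule, namely the constants `ℂ·1`; hence `A_n/ℂ·1`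
is a simple `S_n`-module. -/
theorem polynomials_unique_proper_submodule (n : ℕ) (hn : 2 ≤ n) :
    (∀ D : Wn n, divg D = 0 → ∀ f ∈ Submodule.span ℂ {(1 : Pn n)},
        D f ∈ Submodule.span ℂ {(1 : Pn n)}) ∧
    Submodule.span ℂ {(1 : Pn n)} ≠ ⊥ ∧ Submodule.span ℂ {(1 : Pn n)} ≠ ⊤ ∧
    (∀ N : Submodule ℂ (Pn n), (∀ D : Wn n, divg D = 0 → ∀ f ∈ N, D f ∈ N) →
      N ≠ ⊥ → N ≠ ⊤ → N = Submodule.span ℂ {(1 : Pn n)}) := by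
  have hcard : 1 < Fintype.card (Fin n) := by simpa using (show 1 < n by omega)
  refine ⟨?_, ?_, ?_, ?_⟩
  · -- invariance of the constants
    intro D _ f hf
    rw [Submodule.mem_span_singleton] at hf
    obtain ⟨c, rfl⟩ := hf
    rw [Derivation.map_smul, Derivation.map_one_eq_zero, smul_zero]
    exact Submodule.zero_mem _
  · -- ≠ ⊥
    intro h
    exact one_ne_zero (Submodule.span_singleton_eq_bot.mp h)
  · -- ≠ ⊤
    intro h
    have h0 : (0 : ℕ) < n := by omega
    set i0 : Fin n := ⟨0, h0⟩
    have hX : (X i0 : Pn n) ∈ Submodule.span ℂ {(1 : Pn n)} := h ▸ Submodule.mem_top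
    rw [Submodule.mem_span_singleton] at hX
    obtain ⟨c, hc⟩ := hX
    have hdeg := totalDegree_X (R := ℂ) i0
    rw [← hc, smul_eq_C_mul, mul_one, totalDegree_C] at hdeg
    exact absurd hdeg.symm one_ne_zero
  · -- uniqueness
    intro N hND hNbot hNtop
    have hpd : ∀ i : Fin n, ∀ f ∈ N, pderiv i f ∈ N := fun i f hf =>
      hND _ (divg_pderiv i) f hf
    -- constants in N
    have hconst : ∀ f : Pn n, f ∈ N → f ≠ 0 → f.totalDegree = 0 → (1 : Pn n) ∈ N := by
      intro f hfN hf0 h0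
      set c := coeff 0 f with hcdef
      have hf := eq_C_of_totalDegree_eq_zero h0
      rw [← hcdef] at hf
      have hc : c ≠ 0 := by
        intro h
        apply hf0
        rw [hf, h, map_zero]
      have h1 : (1 : Pn n) = c⁻¹ • f := by
        rw [hf, smul_eq_C_mul, ← C_mul, inv_mul_cancel₀ hc, C_1]
      rw [h1]
      exact N.smul_mem _ hfN
    have key1 : ∀ d : ℕ, ∀ f : Pn n, f ∈ N → f ≠ 0 → f.totalDegree ≤ d → (1 : Pn n) ∈ N := by
      intro d
      induction d with
      | zero => exact fun f hfN hf0 hdeg => hconst f hfN hf0 (Nat.le_zero.mp hdeg)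
      | succ d ih =>
        intro f hfN hf0 hdeg
        rcases Nat.eq_zero_or_pos f.totalDegree with h0 | hpos
        · exact hconst f hfN hf0 h0
        · obtain ⟨i, hne, _, hlt⟩ := pderiv_degree_lt hpos
          exact ih (pderiv i f) (hpd i f hfN) hne (by omega)
    have h1N : (1 : Pn n) ∈ N := by
      obtain ⟨f, hfN, hf0⟩ := (Submodule.ne_bot_iff N).mp hNbot
      exact key1 f.totalDegree f hfN hf0 le_rfl
    have hspan_le : Submodule.span ℂ {(1 : Pn n)} ≤ N :=
      Submodule.span_le.mpr (Set.singleton_subset_iff.mpr h1N)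
    by_contra hne
    have hNle : ¬ N ≤ Submodule.span ℂ {(1 : Pn n)} := fun hle =>
      hne (le_antisymm hle hspan_le)
    obtain ⟨f, hfN, hf1⟩ := SetLike.not_le_iff_exists.mp hNle
    have hfpos : 0 < f.totalDegree := by
      rcases Nat.eq_zero_or_pos f.totalDegree with h0 | h
      · exfalso
        apply hf1
        rw [eq_C_of_totalDegree_eq_zero h0, Submodule.mem_span_singleton]
        exact ⟨coeff 0 f, by rw [smul_eq_C_mul, mul_one]⟩
      · exact h
    -- extract an element of total degree 1
    have key2 : ∀ d : ℕ, ∀ g : Pn n, g ∈ N → 0 < g.totalDegree → g.totalDegree ≤ d →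
        ∃ h ∈ N, MvPolynomial.totalDegree h = 1 := by
      intro d
      induction d with
      | zero => intro g _ h1 h2; omega
      | succ d ih =>
        intro g hgN hgpos hgle
        rcases eq_or_lt_of_le (Nat.succ_le_of_lt hgpos) with h1 | h1
        · exact ⟨g, hgN, h1.symm⟩
        · obtain ⟨i, _, hge, hlt⟩ := pderiv_degree_lt hgpos
          exact ih (pderiv i g) (hpd i g hgN) (by omega) (by omega)
    obtain ⟨g, hgN, hgdeg⟩ := key2 f.totalDegree f hfN hfpos le_rfl
    -- find i0 with nonzero coefficient of X i0 in g
    have hg0 : g ≠ 0 := by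
      intro h
      rw [h, totalDegree_zero] at hgdeg
      omega
    obtain ⟨s, hs, hsd⟩ := Finset.exists_mem_eq_sup g.support (support_nonempty.mpr hg0)
      (fun s => s.sum fun _ e => e)
    rw [← totalDegree, hgdeg] at hsd
    have hsne : s ≠ 0 := by
      intro h
      rw [h] at hsd
      simp at hsd
    obtain ⟨i0, hi0⟩ := Finsupp.ne_iff.mp hsne
    rw [Finsupp.coe_zero, Pi.zero_apply] at hi0
    have hle : Finsupp.single i0 1 ≤ s := Finsupp.single_le_iff.mpr (by omega)
    have hus : (s - Finsupp.single i0 1) + Finsupp.single i0 1 = s := tsub_add_cancel_of_le hle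
    have hsub0 : s - Finsupp.single i0 1 = 0 := by
      apply finsupp_sum_eq_zero
      have h2 := degsum (s - Finsupp.single i0 1) i0
      rw [hus, ← hsd] at h2
      omega
    have hs_eq : (0 : Fin n →₀ ℕ) + Finsupp.single i0 1 = s := by rw [← hsub0, hus]
    set c0 : ℂ := coeff 0 (pderiv i0 g) with hc0def
    have hc0 : c0 ≠ 0 := by
      rw [hc0def, _root_.coeff_pderiv, hs_eq]
      exact mul_ne_zero (Nat.cast_ne_zero.mpr (Nat.succ_ne_zero _)) (mem_support_iff.mp hs)
    have hpdg : pderiv i0 g = C c0 := by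
      have hlt := totalDegree_pderiv_lt (by omega : 0 < g.totalDegree) i0
      rw [hgdeg] at hlt
      exact eq_C_of_totalDegree_eq_zero (by omega)
    -- get X k ∈ N for some k
    obtain ⟨k, hk⟩ := Fintype.exists_ne_of_one_lt_card hcard i0
    have hXk : (X k : Pn n) ∈ N := by
      have hdivT : divg (tdDeriv (Pi.single k 1) i0) = 0 :=
        divg_tdDeriv_zero i0 (Pi.single_eq_of_ne (Ne.symm hk) 1)
      have hTg : tdDeriv (Pi.single k 1) i0 g ∈ N := hND _ hdivT g hgN
      rw [tdDeriv_apply, nmon_single, hpdg] at hTg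
      have := N.smul_mem c0⁻¹ hTg
      rwa [smul_eq_C_mul, mul_comm (X k) (C c0), ← mul_assoc, ← C_mul,
        inv_mul_cancel₀ hc0, C_1, one_mul] at this
    have hXall : ∀ m : Fin n, (X m : Pn n) ∈ N := by
      intro m
      rcases eq_or_ne m k with rfl | hm
      · exact hXk
      · have hdivT : divg (tdDeriv (Pi.single m 1) k) = 0 :=
          divg_tdDeriv_zero k (Pi.single_eq_of_ne (Ne.symm hm) 1)
        have hT : tdDeriv (Pi.single m 1) k (X k) ∈ N := hND _ hdivT _ hXk
        rwa [tdDeriv_apply, nmon_single, pderiv_X_self, mul_one] at hT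
    -- all monomials are in N
    have hmono : ∀ α : Fin n → ℕ, nmon α ∈ N := by
      intro α
      by_cases hα : α = 0
      · rw [hα, nmon_zero]
        exact h1N
      · obtain ⟨i, hi⟩ : ∃ i, α i ≠ 0 := by
          by_contra h
          push_neg at h
          exact hα (funext h)
        obtain ⟨j, hj⟩ := Fintype.exists_ne_of_one_lt_card hcard i
        set δ : Fin n → ℕ := fun m => α m - (Pi.single i 1 : Fin n → ℕ) m with hδ
        have hδi : δ + Pi.single i 1 = α := by
          funext m
          show (α m - (Pi.single i 1 : Fin n → ℕ) m) + (Pi.single i 1 : Fin n → ℕ) m = α m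
          rcases eq_or_ne m i with rfl | hm
          · rw [Pi.single_eq_same]
            omega
          · rw [Pi.single_eq_of_ne hm]
            omega
        set c1 : ℂ := ((δ j + 1 : ℕ) : ℂ) with hc1def
        set c2 : ℂ := ((δ i + 1 : ℕ) : ℂ) with hc2def
        have hc1 : c1 ≠ 0 := Nat.cast_ne_zero.mpr (Nat.succ_ne_zero _)
        set E : Wn n := c1 • tdDeriv (δ + Pi.single i 1) i - c2 • tdDeriv (δ + Pi.single j 1) j
          with hE
        have hdivE : divg E = 0 := by
          rw [hE, divg_sub, divg_smul, divg_smul, divg_tdDeriv, divg_tdDeriv,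
            pderiv_nmon_succ, pderiv_nmon_succ, ← hc1def, ← hc2def, smul_comm c1 c2,
            sub_self]
        have hEX : E (X i) = c1 • nmon α := by
          rw [hE, Derivation.sub_apply, Derivation.smul_apply, Derivation.smul_apply,
            tdDeriv_apply, tdDeriv_apply, pderiv_X_self, pderiv_X_of_ne (Ne.symm hj),
            mul_one, mul_zero, smul_zero, sub_zero, hδi]
        have hEmem : E (X i) ∈ N := hND E hdivE _ (hXall i)
        rw [hEX] at hEmem
        have := N.smul_mem c1⁻¹ hEmem
        rwa [inv_smul_smul₀ hc1] at this
    -- hence N = ⊤, contradiction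
    apply hNtop
    rw [eq_top_iff]
    intro p _
    have hp := as_sum p
    rw [hp]
    apply Submodule.sum_mem
    intro v _
    have hmv : (monomial v) (coeff v p) = (coeff v p) • nmon (⇑v) := by
      rw [nmon_coe, smul_monomial, smul_eq_mul, mul_one]
    rw [hmv]
    exact N.smul_mem _ (hmono _)


end
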